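/- Let A ∈ ℝ^{m×n}, C ∈ ℝ^{p×n} satisfy rank(C) = p and rank([A; C]) = n. With P = I_n − C†C, K = (AP)†, C_A† = (I_n − KA)C†, the inverse of the augmented matrix 𝒜 = [[0, 0, C], [0, I_m, A], [Cᵀ, Aᵀ, 0]] is the block matrix [[(AC_A†)ᵀ(AC_A†), −(AC_A†)ᵀ, (C_A†)ᵀ], [−AC_A†, I_m − (AP)K, Kᵀ], [C_A†, K, −((AP)ᵀ(AP))†]]. -/

import Mathlib

open Matrix

/-- `Bd` is the Moore–Penrose pseudoinverse of `B`. -/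
def IsMoorePenrose {a b : Type*} [Fintype a] [Fintype b]
    (B : Matrix a b ℝ) (Bd : Matrix b a ℝ) : Prop :=
  B * Bd * B = B ∧ Bd * B * Bd = Bd ∧ (B * Bd)ᵀ = B * Bd ∧ (Bd * B)ᵀ = Bd * B

/-- Real matrices: if `Dᵀ * D = 0` then `D = 0`. -/
lemma aux_tmul_zero {a b : Type*} [Fintype a] [Fintype b] (D : Matrix a b ℝ)
    (h : Dᵀ * D = 0) : D = 0 := by
  have hc : Dᴴ = Dᵀ := by ext i j; simp [Matrix.conjTranspose_apply]
  exact Matrix.conjTranspose_mul_self_eq_zero.mp (by rw [hc]; exact h)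

/-- A matrix with full column rank is left-cancellable. -/
lemma aux_mul_left_cancel {n : ℕ} {r k : Type*} [Fintype r] [Fintype k]
    (B : Matrix r (Fin n) ℝ) (h : B.rank = n)
    (X : Matrix (Fin n) k ℝ) (hX : B * X = 0) : X = 0 := by
  have hker : LinearMap.ker B.mulVecLin = ⊥ := by
    have h1 := LinearMap.finrank_range_add_finrank_ker B.mulVecLin
    have h2 : Module.finrank ℝ (Fin n → ℝ) = n := by simp
    have h3 : Module.finrank ℝ (LinearMap.range B.mulVecLin) = n := h
    have h4 : Module.finrank ℝ (LinearMap.ker B.mulVecLin) = 0 := by omega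
    exact Submodule.finrank_eq_zero.mp h4
  ext i j
  have hv : B.mulVec (fun l => X l j) = 0 := by
    ext i'
    have := (Matrix.ext_iff.2 hX) i' j
    simpa [Matrix.mul_apply, Matrix.mulVec, dotProduct] using this
  have hm : (fun l => X l j) ∈ LinearMap.ker B.mulVecLin := by
    simpa [Matrix.mulVecLin] using hv
  rw [hker, Submodule.mem_bot] at hm
  exact congrFun hm i

/-- Transposing a Moore–Penrose pair. -/
lemma aux_mp_transpose {a b : Type*} [Fintype a] [Fintype b] {B : Matrix a b ℝ}
    {X : Matrix b a ℝ} (h : IsMoorePenrose B X) : IsMoorePenrose Bᵀ Xᵀ := by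
  obtain ⟨h1, h2, h3, h4⟩ := h
  refine ⟨?_, ?_, ?_, ?_⟩
  · rw [← Matrix.transpose_mul, ← Matrix.transpose_mul, ← Matrix.mul_assoc, h1]
  · rw [← Matrix.transpose_mul, ← Matrix.transpose_mul, ← Matrix.mul_assoc, h2]
  · rw [← Matrix.transpose_mul, Matrix.transpose_transpose, h4]
  · rw [← Matrix.transpose_mul, Matrix.transpose_transpose, h3]

lemma aux_mp_mul_eq {a b : Type*} [Fintype a] [Fintype b] {B : Matrix a b ℝ}
    {X Y : Matrix b a ℝ} (hX : IsMoorePenrose B X) (hY : IsMoorePenrose B Y) :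
    B * X = B * Y := by
  obtain ⟨x1, x2, x3, x4⟩ := hX
  obtain ⟨y1, y2, y3, y4⟩ := hY
  calc B * X = B * Y * B * X := by rw [y1]
    _ = (B * Y) * (B * X) := by rw [Matrix.mul_assoc (B * Y) B X]
    _ = (B * Y)ᵀ * (B * X)ᵀ := by rw [y3, x3]
    _ = ((B * X) * (B * Y))ᵀ := (Matrix.transpose_mul (B * X) (B * Y)).symm
    _ = ((B * X) * B * Y)ᵀ := by rw [Matrix.mul_assoc (B * X) B Y]
    _ = (B * (X * B) * Y)ᵀ := by rw [Matrix.mul_assoc B X B]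
    _ = (B * X * B * Y)ᵀ := by rw [← Matrix.mul_assoc B X B]
    _ = (B * Y)ᵀ := by rw [x1]
    _ = B * Y := y3

/-- Uniqueness of the Moore–Penrose pseudoinverse. -/
lemma aux_mp_unique {a b : Type*} [Fintype a] [Fintype b] {B : Matrix a b ℝ}
    {X Y : Matrix b a ℝ} (hX : IsMoorePenrose B X) (hY : IsMoorePenrose B Y) :
    X = Y := by
  have hBX : B * X = B * Y := aux_mp_mul_eq hX hY
  have hXB : X * B = Y * B := by
    have := aux_mp_mul_eq (aux_mp_transpose hX) (aux_mp_transpose hY)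
    have := congrArg Matrix.transpose this
    simpa [Matrix.transpose_mul] using this
  obtain ⟨x1, x2, x3, x4⟩ := hX
  obtain ⟨y1, y2, y3, y4⟩ := hY
  calc X = X * B * X := x2.symm
    _ = X * (B * X) := by rw [Matrix.mul_assoc]
    _ = X * (B * Y) := by rw [hBX]
    _ = X * B * Y := by rw [Matrix.mul_assoc]
    _ = Y * B * Y := by rw [hXB]
    _ = Y := y2

lemma aux_fromRows_add {m₁ m₂ n : Type*} (a c : Matrix m₁ n ℝ) (b d : Matrix m₂ n ℝ) :
    Matrix.fromRows a b + Matrix.fromRows c d = Matrix.fromRows (a + c) (b + d) := by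
  ext (i | i) j <;> simp

/-- Under the rank conditions, the inverse of the augmented matrix
`𝒜 = [[0,0,C],[0,I_m,A],[Cᵀ,Aᵀ,0]]` is
`[[(AC_A†)ᵀ(AC_A†), −(AC_A†)ᵀ, (C_A†)ᵀ], [−AC_A†, I − (AP)K, Kᵀ], [C_A†, K, −((AP)ᵀ(AP))†]]`,
where `P = I − C†C`, `K = (AP)†`, `C_A† = (I − KA)C†`. -/
theorem stmt11 (m n p : ℕ) (A : Matrix (Fin m) (Fin n) ℝ) (C : Matrix (Fin p) (Fin n) ℝ)
    (hC : C.rank = p) (hAC : (Matrix.fromRows A C).rank = n)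
    (Cdag : Matrix (Fin n) (Fin p) ℝ) (hCdag : IsMoorePenrose C Cdag)
    (P : Matrix (Fin n) (Fin n) ℝ) (hP : P = 1 - Cdag * C)
    (K : Matrix (Fin n) (Fin m) ℝ) (hK : IsMoorePenrose (A * P) K)
    (CAdag : Matrix (Fin n) (Fin p) ℝ) (hCAdag : CAdag = (1 - K * A) * Cdag)
    (M : Matrix (Fin n) (Fin n) ℝ) (hM : IsMoorePenrose ((A * P)ᵀ * (A * P)) M) :
    (Matrix.fromBlocks
        (0 : Matrix (Fin p) (Fin p) ℝ)
        (Matrix.fromCols (0 : Matrix (Fin p) (Fin m) ℝ) C)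
        (Matrix.fromRows (0 : Matrix (Fin m) (Fin p) ℝ) Cᵀ)
        (Matrix.fromBlocks (1 : Matrix (Fin m) (Fin m) ℝ) A Aᵀ 0)) *
      (Matrix.fromBlocks
        ((A * CAdag)ᵀ * (A * CAdag))
        (Matrix.fromCols (-(A * CAdag)ᵀ) CAdagᵀ)
        (Matrix.fromRows (-(A * CAdag)) CAdag)
        (Matrix.fromBlocks (1 - (A * P) * K) Kᵀ K (-M))) = 1 ∧
    (Matrix.fromBlocks
        ((A * CAdag)ᵀ * (A * CAdag))
        (Matrix.fromCols (-(A * CAdag)ᵀ) CAdagᵀ)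
        (Matrix.fromRows (-(A * CAdag)) CAdag)
        (Matrix.fromBlocks (1 - (A * P) * K) Kᵀ K (-M))) *
      (Matrix.fromBlocks
        (0 : Matrix (Fin p) (Fin p) ℝ)
        (Matrix.fromCols (0 : Matrix (Fin p) (Fin m) ℝ) C)
        (Matrix.fromRows (0 : Matrix (Fin m) (Fin p) ℝ) Cᵀ)
        (Matrix.fromBlocks (1 : Matrix (Fin m) (Fin m) ℝ) A Aᵀ 0)) = 1 := by
  obtain ⟨c1, c2, c3, c4⟩ := id hCdag
  set B := A * P with hBdef
  set N := Bᵀ * B with hNdef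
  obtain ⟨k1, k2, k3, k4⟩ := id hK
  obtain ⟨m1, m2, m3, m4⟩ := id hM
  clear_value B N
  -- basic facts about P
  have hPt : Pᵀ = P := by rw [hP, Matrix.transpose_sub, Matrix.transpose_one, c4]
  have hCdCCdC : Cdag * C * (Cdag * C) = Cdag * C := by
    rw [← Matrix.mul_assoc, c2]
  have hPP : P * P = P := by
    rw [hP, Matrix.sub_mul, Matrix.one_mul, Matrix.mul_sub, Matrix.mul_one, hCdCCdC]
    abel
  have hCP : C * P = 0 := by
    rw [hP, Matrix.mul_sub, Matrix.mul_one, ← Matrix.mul_assoc, c1, sub_self]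
  have hBP : B * P = B := by rw [hBdef, Matrix.mul_assoc, hPP]
  have hPBt : P * Bᵀ = Bᵀ := by
    rw [hBdef, Matrix.transpose_mul, hPt, ← Matrix.mul_assoc, hPP]
  -- C has full row rank: C * Cdag = 1
  have hCCd : C * Cdag = 1 := by
    have hrt : (Cᵀ).rank = p := by rw [Matrix.rank_transpose, hC]
    have h0 : Cᵀ * (C * Cdag - 1) = 0 := by
      rw [Matrix.mul_sub, Matrix.mul_one, ← c3, ← Matrix.transpose_mul, c1, sub_self]
    have := aux_mul_left_cancel Cᵀ hrt _ h0
    exact sub_eq_zero.mp this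
  -- symmetry of N and M
  have hNsym : Nᵀ = N := by
    rw [hNdef, Matrix.transpose_mul, Matrix.transpose_transpose]
  have hMsym : Mᵀ = M := by
    refine aux_mp_unique (B := N) ?_ hM
    refine ⟨?_, ?_, ?_, ?_⟩
    · have t := congrArg Matrix.transpose m1
      rw [Matrix.transpose_mul, Matrix.transpose_mul, hNsym] at t
      calc N * Mᵀ * N = N * (Mᵀ * N) := by rw [Matrix.mul_assoc]
        _ = N := t
    · have t := congrArg Matrix.transpose m2
      rw [Matrix.transpose_mul, Matrix.transpose_mul, hNsym] at t
      calc Mᵀ * N * Mᵀ = Mᵀ * (N * Mᵀ) := by rw [Matrix.mul_assoc]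
        _ = Mᵀ := t
    · have t := m4
      rw [Matrix.transpose_mul, hNsym] at t
      rw [t]; exact m4
    · have t := m3
      rw [Matrix.transpose_mul, hNsym] at t
      rw [t]; exact m3
  have hMN_comm : M * N = N * M := by
    rw [← m4, Matrix.transpose_mul, hNsym, hMsym]
  -- P * M = M, M * P = M
  have hPN : P * N = N := by rw [hNdef, ← Matrix.mul_assoc, hPBt]
  have hPM : P * M = M := by
    have e : M = P * (N * (M * M)) := by
      calc M = M * N * M := m2.symm
        _ = N * M * M := by rw [hMN_comm]
        _ = N * (M * M) := by rw [Matrix.mul_assoc]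
        _ = P * N * (M * M) := by rw [hPN]
        _ = P * (N * (M * M)) := by rw [Matrix.mul_assoc]
    calc P * M = P * (P * (N * (M * M))) := by rw [← e]
      _ = P * P * (N * (M * M)) := by rw [Matrix.mul_assoc]
      _ = P * (N * (M * M)) := by rw [hPP]
      _ = M := e.symm
  have hMP : M * P = M := by
    have t := congrArg Matrix.transpose hPM
    rwa [Matrix.transpose_mul, hMsym, hPt] at t
  -- B * (M * N) = B
  have hBtD : Bᵀ * (B * (M * N) - B) = 0 := by
    rw [Matrix.mul_sub, ← Matrix.mul_assoc Bᵀ B (M * N), ← hNdef,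
      ← Matrix.mul_assoc N M N, m1]
    exact sub_self _
  have hBMN : B * (M * N) = B := by
    have hD : (B * (M * N) - B)ᵀ * (B * (M * N) - B) = 0 := by
      rw [Matrix.transpose_sub, Matrix.transpose_mul, Matrix.sub_mul,
        Matrix.mul_assoc ((M * N)ᵀ) Bᵀ _, hBtD, Matrix.mul_zero, sub_zero]
    have := aux_tmul_zero _ hD
    exact sub_eq_zero.mp this
  have hNMBt : N * (M * Bᵀ) = Bᵀ := by
    have t := congrArg Matrix.transpose hBMN
    rwa [Matrix.transpose_mul, m4, hMN_comm, Matrix.mul_assoc] at t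
  -- K = M * Bᵀ
  have hKMBt : K = M * Bᵀ := by
    refine aux_mp_unique hK ?_
    refine ⟨?_, ?_, ?_, ?_⟩
    · calc B * (M * Bᵀ) * B = B * (M * Bᵀ * B) := by rw [Matrix.mul_assoc]
        _ = B * (M * (Bᵀ * B)) := by rw [Matrix.mul_assoc M Bᵀ B]
        _ = B * (M * N) := by rw [← hNdef]
        _ = B := hBMN
    · calc M * Bᵀ * B * (M * Bᵀ) = M * (Bᵀ * B) * (M * Bᵀ) := by
            rw [Matrix.mul_assoc M Bᵀ B]
        _ = M * N * (M * Bᵀ) := by rw [← hNdef]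
        _ = M * N * M * Bᵀ := by rw [← Matrix.mul_assoc (M * N) M Bᵀ]
        _ = M * Bᵀ := by rw [m2]
    · rw [Matrix.transpose_mul, Matrix.transpose_mul, Matrix.transpose_transpose,
        hMsym, ← Matrix.mul_assoc]
    · rw [Matrix.mul_assoc M Bᵀ B, ← hNdef, m4]
  have hKMA : K = M * Aᵀ := by
    rw [hKMBt, hBdef, Matrix.transpose_mul, hPt, ← Matrix.mul_assoc, hMP]
  have hPK : P * K = K := by rw [hKMA, ← Matrix.mul_assoc, hPM]
  have hCK : C * K = 0 := by
    rw [← hPK, ← Matrix.mul_assoc, hCP, Matrix.zero_mul]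
  have hCM : C * M = 0 := by
    rw [← hPM, ← Matrix.mul_assoc, hCP, Matrix.zero_mul]
  have hAK : A * K = B * K := by
    rw [← hPK, ← Matrix.mul_assoc, ← hBdef, hPK]
  have hNK : N * K = Bᵀ := by rw [hKMBt]; exact hNMBt
  -- M * N = P (uses rank of [A; C])
  have hMNP : M * N = P := by
    have hA0 : A * (P - M * N) = 0 := by
      calc A * (P - M * N) = A * P - A * (M * N) := by rw [Matrix.mul_sub]
        _ = B - A * (P * (M * N)) := by
            rw [← hBdef, ← Matrix.mul_assoc P M N, hPM]
        _ = B - A * P * (M * N) := by rw [← Matrix.mul_assoc A P (M * N)]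
        _ = B - B * (M * N) := by rw [← hBdef]
        _ = 0 := by rw [hBMN, sub_self]
    have hC0 : C * (P - M * N) = 0 := by
      rw [Matrix.mul_sub, hCP, ← Matrix.mul_assoc C M N, hCM, Matrix.zero_mul, sub_self]
    have h0 : Matrix.fromRows A C * (P - M * N) = 0 := by
      rw [Matrix.fromRows_mul, hA0, hC0, Matrix.fromRows_zero]
    have := aux_mul_left_cancel _ hAC _ h0
    exact (sub_eq_zero.mp this).symm
  have hKB : K * B = P := by
    rw [hKMBt, Matrix.mul_assoc M Bᵀ B, ← hNdef, hMNP]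
  -- block identities
  have hCdagC : Cdag * C = 1 - P := by rw [hP]; abel
  have E11 : C * CAdag = 1 := by
    calc C * CAdag = C * (1 - K * A) * Cdag := by rw [hCAdag, ← Matrix.mul_assoc]
      _ = (C - C * K * A) * Cdag := by
          rw [Matrix.mul_sub, Matrix.mul_one, ← Matrix.mul_assoc C K A]
      _ = C * Cdag := by rw [hCK, Matrix.zero_mul, sub_zero]
      _ = 1 := hCCd
  have E23 : A * M = Kᵀ := by
    rw [hKMA, Matrix.transpose_mul, Matrix.transpose_transpose, hMsym]
  have E22 : 1 - B * K + A * K = 1 := by rw [hAK]; abel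
  have hY : A * CAdag = (1 - B * K) * (A * Cdag) := by
    calc A * CAdag = A * (1 - K * A) * Cdag := by rw [hCAdag, ← Matrix.mul_assoc]
      _ = (A - A * K * A) * Cdag := by
          rw [Matrix.mul_sub, Matrix.mul_one, ← Matrix.mul_assoc A K A]
      _ = (A - B * K * A) * Cdag := by rw [hAK]
      _ = (1 - B * K) * A * Cdag := by
          rw [Matrix.sub_mul (1 : Matrix (Fin m) (Fin m) ℝ) (B * K) A, Matrix.one_mul]
      _ = (1 - B * K) * (A * Cdag) := by rw [Matrix.mul_assoc]
  have hBtY : Bᵀ * (A * CAdag) = 0 := by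
    calc Bᵀ * (A * CAdag) = Bᵀ * (1 - B * K) * (A * Cdag) := by
          rw [hY, ← Matrix.mul_assoc]
      _ = (Bᵀ - N * K) * (A * Cdag) := by
          rw [Matrix.mul_sub, Matrix.mul_one, ← Matrix.mul_assoc Bᵀ B K, ← hNdef]
      _ = 0 := by rw [hNK, sub_self, Matrix.zero_mul]
  have hYC : (A * CAdag) * C = A - B * (K * A) := by
    calc (A * CAdag) * C = (1 - B * K) * (A * Cdag) * C := by rw [hY]
      _ = (1 - B * K) * (A * (Cdag * C)) := by
          rw [Matrix.mul_assoc (1 - B * K) (A * Cdag) C, Matrix.mul_assoc A Cdag C]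
      _ = (1 - B * K) * (A - B) := by
          rw [hCdagC, Matrix.mul_sub, Matrix.mul_one, ← hBdef]
      _ = (A - B * K * A) - (B - B * K * B) := by
          rw [Matrix.mul_sub, Matrix.sub_mul, Matrix.sub_mul, Matrix.one_mul,
            Matrix.one_mul]
      _ = A - B * (K * A) := by rw [k1, sub_self, sub_zero, Matrix.mul_assoc]
  have E31 : Cᵀ * ((A * CAdag)ᵀ * (A * CAdag)) = Aᵀ * (A * CAdag) := by
    calc Cᵀ * ((A * CAdag)ᵀ * (A * CAdag))
        = Cᵀ * (A * CAdag)ᵀ * (A * CAdag) := by rw [Matrix.mul_assoc]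
      _ = ((A * CAdag) * C)ᵀ * (A * CAdag) := by rw [← Matrix.transpose_mul]
      _ = (Aᵀ - (K * A)ᵀ * Bᵀ) * (A * CAdag) := by
          rw [hYC, Matrix.transpose_sub, Matrix.transpose_mul B (K * A)]
      _ = Aᵀ * (A * CAdag) - (K * A)ᵀ * (Bᵀ * (A * CAdag)) := by
          rw [Matrix.sub_mul, Matrix.mul_assoc]
      _ = Aᵀ * (A * CAdag) := by rw [hBtY, Matrix.mul_zero, sub_zero]
  have E32 : Aᵀ * (1 - B * K) = Cᵀ * (A * CAdag)ᵀ := by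
    calc Aᵀ * (1 - B * K) = Aᵀ - Aᵀ * (B * K) := by
          rw [Matrix.mul_sub, Matrix.mul_one]
      _ = Aᵀ - Aᵀ * (B * K)ᵀ := by rw [k3]
      _ = Aᵀ - Aᵀ * (Kᵀ * Bᵀ) := by rw [Matrix.transpose_mul]
      _ = Aᵀ - Aᵀ * Kᵀ * Bᵀ := by rw [← Matrix.mul_assoc]
      _ = Aᵀ - (K * A)ᵀ * Bᵀ := by rw [Matrix.transpose_mul K A]
      _ = (A - B * (K * A))ᵀ := by
          rw [Matrix.transpose_sub, Matrix.transpose_mul B (K * A)]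
      _ = ((A * CAdag) * C)ᵀ := by rw [hYC]
      _ = Cᵀ * (A * CAdag)ᵀ := by rw [Matrix.transpose_mul]
  have E33 : CAdag * C = 1 - K * A := by
    calc CAdag * C = (1 - K * A) * (Cdag * C) := by rw [hCAdag, Matrix.mul_assoc]
      _ = (1 - K * A) * (1 - P) := by rw [hCdagC]
      _ = 1 - P - K * A + K * A * P := by noncomm_ring
      _ = 1 - P - K * A + P := by rw [Matrix.mul_assoc K A P, ← hBdef, hKB]
      _ = 1 - K * A := by abel
  have E33' : Cᵀ * CAdagᵀ + Aᵀ * Kᵀ = 1 := by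
    rw [← Matrix.transpose_mul CAdag C, E33, ← Matrix.transpose_mul K A,
      Matrix.transpose_sub, Matrix.transpose_one]
    abel
  -- assemble the first product
  have h1 : (Matrix.fromBlocks
        (0 : Matrix (Fin p) (Fin p) ℝ)
        (Matrix.fromCols (0 : Matrix (Fin p) (Fin m) ℝ) C)
        (Matrix.fromRows (0 : Matrix (Fin m) (Fin p) ℝ) Cᵀ)
        (Matrix.fromBlocks (1 : Matrix (Fin m) (Fin m) ℝ) A Aᵀ 0)) *
      (Matrix.fromBlocks
        ((A * CAdag)ᵀ * (A * CAdag))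
        (Matrix.fromCols (-(A * CAdag)ᵀ) CAdagᵀ)
        (Matrix.fromRows (-(A * CAdag)) CAdag)
        (Matrix.fromBlocks (1 - B * K) Kᵀ K (-M))) = 1 := by
    rw [Matrix.fromBlocks_multiply, ← Matrix.fromBlocks_one, Matrix.fromBlocks_inj]
    refine ⟨?_, ?_, ?_, ?_⟩
    · rw [Matrix.zero_mul, zero_add, Matrix.fromCols_mul_fromRows,
        Matrix.zero_mul, zero_add, E11]
    · rw [Matrix.zero_mul, zero_add, Matrix.fromCols_mul_fromBlocks,
        Matrix.zero_mul, Matrix.zero_mul, zero_add, zero_add, hCK,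
        Matrix.mul_neg, hCM, neg_zero, Matrix.fromCols_zero]
    · rw [Matrix.fromRows_mul, Matrix.fromBlocks_mul_fromRows, aux_fromRows_add,
        Matrix.zero_mul, Matrix.one_mul, Matrix.zero_mul, Matrix.mul_neg, E31]
      rw [zero_add, neg_add_cancel, add_zero, add_neg_cancel, Matrix.fromRows_zero]
    · rw [Matrix.fromRows_mul_fromCols, Matrix.fromBlocks_multiply,
        Matrix.fromBlocks_add, ← Matrix.fromBlocks_one, Matrix.fromBlocks_inj]
      refine ⟨?_, ?_, ?_, ?_⟩
      · rw [Matrix.zero_mul, Matrix.one_mul, zero_add, E22]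
      · rw [Matrix.zero_mul, Matrix.one_mul, zero_add, Matrix.mul_neg, E23,
          add_neg_cancel]
      · rw [Matrix.mul_neg, Matrix.zero_mul, add_zero, ← E32, neg_add_cancel]
      · rw [Matrix.zero_mul, add_zero, E33']
  exact ⟨h1, mul_eq_one_comm.mp h1⟩
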